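/- Let p > 1, γ > 0, κ > 0, λ > 0, α < 0, m₁, m₂ ∈ ℝ, and ψ̃ = ((1/π)√(-λκα/2))^{(p-1)/p}(p/(p-1))γ^{1/p}. For the q-Gaussian density π(u₁,u₂) = ((p-1)/(γp))^{1/(p-1)}(ψ̃ - κ(u₁-m₁)² + (αλ/2)(u₂-m₂)²)_+^{1/(p-1)}, the Tsallis entropy satisfies ∫_{ℝ²} (1/(p-1))(π(u) - π(u)^p) du = 1/(p-1) - ψ̃/((2p-1)γ). -/

import Mathlib

open Real MeasureTheory

noncomputable def Jint (s : ℝ) : ℝ := ∫ y : ℝ, max (1 - y ^ 2) 0 ^ s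

lemma cont_rpow_max {X : Type*} [TopologicalSpace X] {g : X → ℝ} (hg : Continuous g)
    {s : ℝ} (hs : 0 < s) : Continuous fun x => max (g x) 0 ^ s :=
  (hg.max continuous_const).rpow_const fun _ => Or.inr hs.le

lemma radial_int (s : ℝ) (hs : 0 < s) :
    ∫ r in Set.Ioi (0:ℝ), r * max (1 - r ^ 2) 0 ^ s = 1 / (2 * (s + 1)) := by
  have hcont : Continuous fun r : ℝ => r * max (1 - r ^ 2) 0 ^ s :=
    continuous_id.mul (cont_rpow_max (by fun_prop) hs)
  have hzero : ∀ r ∈ Set.Ioi (1:ℝ), r * max (1 - r ^ 2) 0 ^ s = 0 := by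
    intro r hr
    simp only [Set.mem_Ioi] at hr
    have : max (1 - r ^ 2) 0 = 0 := max_eq_right (by nlinarith)
    rw [this, Real.zero_rpow hs.ne', mul_zero]
  have hsplit : Set.Ioi (0:ℝ) = Set.Ioc 0 1 ∪ Set.Ioi 1 := by
    rw [Set.Ioc_union_Ioi_eq_Ioi zero_le_one]
  rw [hsplit, setIntegral_union (Set.Ioc_disjoint_Ioi le_rfl) measurableSet_Ioi
    (hcont.integrableOn_Ioc)
    ((integrableOn_congr_fun hzero measurableSet_Ioi).mpr (integrableOn_zero))]
  rw [setIntegral_congr_fun measurableSet_Ioi hzero]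
  simp only [integral_zero, add_zero]
  have heq : ∀ r ∈ Set.Ioc (0:ℝ) 1, r * max (1 - r ^ 2) 0 ^ s = r * (1 - r ^ 2) ^ s := by
    intro r hr
    obtain ⟨h0, h1⟩ := hr
    rw [max_eq_left (by nlinarith)]
  rw [setIntegral_congr_fun measurableSet_Ioc heq,
    ← intervalIntegral.integral_of_le zero_le_one]
  have hderiv : ∀ x ∈ Set.uIcc (0:ℝ) 1, HasDerivAt (fun r : ℝ => 1 - r ^ 2) (-2 * x) x := by
    intro x _
    have := (hasDerivAt_pow 2 x).const_sub 1
    simpa using this.congr_deriv (by ring)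
  have hcg : Continuous fun u : ℝ => u ^ s := by
    rw [continuous_iff_continuousAt]
    exact fun x => Real.continuousAt_rpow_const x s (Or.inr hs.le)
  have hsub := intervalIntegral.integral_comp_smul_deriv hderiv
    (by fun_prop : ContinuousOn (fun x : ℝ => -2 * x) (Set.uIcc 0 1)) hcg
  simp only [Function.comp, smul_eq_mul] at hsub
  have hr : ∫ u in ((1:ℝ) - 0 ^ 2)..(1 - 1 ^ 2), u ^ s = -(1 / (s + 1)) := by
    norm_num
    rw [intervalIntegral.integral_symm, integral_rpow (Or.inl (by linarith))]
    rw [Real.one_rpow, Real.zero_rpow (by linarith)]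
    field_simp
    norm_num
  rw [hr] at hsub
  have hconst : ∫ x in (0:ℝ)..1, -2 * x * (1 - x ^ 2) ^ s
      = -2 * ∫ x in (0:ℝ)..1, x * (1 - x ^ 2) ^ s := by
    rw [← intervalIntegral.integral_const_mul]
    congr 1; ext x; ring
  rw [hconst] at hsub
  have hs1 : s + 1 ≠ 0 := by linarith
  have h2 : (2:ℝ) * (s + 1) ≠ 0 := by positivity
  field_simp at hsub ⊢
  linarith

lemma unit2D (s : ℝ) (hs : 0 < s) :
    ∫ u : ℝ × ℝ, max (1 - u.1 ^ 2 - u.2 ^ 2) 0 ^ s = π / (s + 1) := by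
  rw [← integral_comp_polarCoord_symm]
  have hcongr : ∀ q ∈ polarCoord.target,
      q.1 • (max (1 - (polarCoord.symm q).1 ^ 2 - (polarCoord.symm q).2 ^ 2) 0 ^ s)
        = (fun r => r * max (1 - r ^ 2) 0 ^ s) q.1 * (fun _ : ℝ => (1:ℝ)) q.2 := by
    intro q _
    have : (polarCoord.symm q).1 ^ 2 + (polarCoord.symm q).2 ^ 2 = q.1 ^ 2 := by
      simp only [polarCoord_symm_apply]
      have := sin_sq_add_cos_sq q.2
      ring_nf
      nlinarith [sin_sq_add_cos_sq q.2]
    have hb : 1 - (polarCoord.symm q).1 ^ 2 - (polarCoord.symm q).2 ^ 2 = 1 - q.1 ^ 2 := by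
      linarith
    rw [hb]
    simp [smul_eq_mul]
  rw [setIntegral_congr_fun polarCoord.open_target.measurableSet hcongr]
  have htarget : polarCoord.target = Set.Ioi (0:ℝ) ×ˢ Set.Ioo (-π) π := rfl
  rw [htarget]
  rw [show (volume : Measure (ℝ × ℝ)) = (volume : Measure ℝ).prod volume from Measure.volume_eq_prod ℝ ℝ]
  rw [← Measure.prod_restrict, integral_prod_mul (fun r : ℝ => r * max (1 - r ^ 2) 0 ^ s) (fun _ : ℝ => (1:ℝ))]
  rw [radial_int s hs]
  simp only [integral_const, smul_eq_mul, mul_one]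
  rw [measureReal_def, Measure.restrict_apply_univ, Real.volume_Ioo, ENNReal.toReal_ofReal (by linarith [Real.pi_pos])]
  have : s + 1 ≠ 0 := by linarith
  field_simp
  ring

lemma oneD (s b t : ℝ) (hs : 0 < s) (hb : 0 < b) :
    ∫ y : ℝ, max (t - b * y ^ 2) 0 ^ s = max t 0 ^ (s + 1/2) / Real.sqrt b * Jint s := by
  rcases le_or_gt t 0 with ht | ht
  · have h1 : ∀ y : ℝ, max (t - b * y ^ 2) 0 ^ s = 0 := by
      intro y
      rw [max_eq_right (by nlinarith), Real.zero_rpow hs.ne']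
    simp only [h1, integral_zero]
    rw [max_eq_right ht, Real.zero_rpow (by linarith), zero_div, zero_mul]
  · set c := Real.sqrt (b / t) with hc_def
    have hbt : 0 < b / t := div_pos hb ht
    have hc : 0 < c := Real.sqrt_pos.mpr hbt
    have hc2 : c ^ 2 = b / t := Real.sq_sqrt hbt.le
    have hsub : ∀ y : ℝ, max (t - b * y ^ 2) 0 ^ s
        = t ^ s * ((fun z => max (1 - z ^ 2) 0 ^ s) (c * y)) := by
      intro y
      have h1 : t - b * y ^ 2 = t * (1 - (c * y) ^ 2) := by
        rw [mul_pow, hc2]; field_simp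
      rw [h1]
      have h2 : max (t * (1 - (c * y) ^ 2)) 0 = t * max (1 - (c * y) ^ 2) 0 := by
        rw [mul_max_of_nonneg _ _ ht.le, mul_zero]
      rw [h2, Real.mul_rpow ht.le (le_max_right _ _)]
    rw [integral_congr_ae (Filter.Eventually.of_forall hsub), integral_const_mul,
      Measure.integral_comp_mul_left (fun z : ℝ => max (1 - z ^ 2) 0 ^ s) c]
    rw [abs_of_pos (inv_pos.mpr hc), smul_eq_mul]
    have hcinv : c⁻¹ = Real.sqrt t / Real.sqrt b := by
      rw [hc_def, ← Real.sqrt_inv, inv_div, Real.sqrt_div ht.le]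
    rw [hcinv, max_eq_left ht.le]
    have hJd : (∫ y : ℝ, max (1 - y ^ 2) 0 ^ s) = Jint s := rfl
    rw [hJd]
    have hts : t ^ s * (Real.sqrt t / Real.sqrt b) = t ^ (s + 1/2) / Real.sqrt b := by
      rw [Real.sqrt_eq_rpow, Real.rpow_add ht]
      ring
    rw [show t ^ s * (Real.sqrt t / Real.sqrt b * Jint s)
        = t ^ s * (Real.sqrt t / Real.sqrt b) * Jint s by ring, hts]

lemma integrable2D (s a b c m₁ m₂ : ℝ) (hs : 0 < s) (ha : 0 < a) (hb : 0 < b) (hc : 0 < c) :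
    Integrable (fun u : ℝ × ℝ => max (c - a * (u.1 - m₁) ^ 2 - b * (u.2 - m₂) ^ 2) 0 ^ s) := by
  apply Continuous.integrable_of_hasCompactSupport (cont_rpow_max (by fun_prop) hs)
  apply HasCompactSupport.intro (isCompact_closedBall ((m₁, m₂) : ℝ × ℝ)
    (Real.sqrt (c / a) + Real.sqrt (c / b)))
  intro u hu
  have hd : Real.sqrt (c / a) + Real.sqrt (c / b) < dist u (m₁, m₂) := by
    simpa [Metric.mem_closedBall, not_le] using hu
  rw [Prod.dist_eq] at hd
  have hkey : c - a * (u.1 - m₁) ^ 2 - b * (u.2 - m₂) ^ 2 < 0 := by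
    rcases lt_max_iff.mp hd with h | h
    · rw [Real.dist_eq] at h
      have h1 : Real.sqrt (c / a) < |u.1 - m₁| := by
        have := Real.sqrt_nonneg (c / b); linarith
      have h2 : c / a < (u.1 - m₁) ^ 2 := by
        have := Real.lt_sq_of_sqrt_lt h1
        rwa [sq_abs] at this
      have h3 : c < a * (u.1 - m₁) ^ 2 := by
        rw [div_lt_iff₀ ha] at h2; linarith [h2]
      nlinarith [sq_nonneg (u.2 - m₂)]
    · rw [Real.dist_eq] at h
      have h1 : Real.sqrt (c / b) < |u.2 - m₂| := by
        have := Real.sqrt_nonneg (c / a); linarith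
      have h2 : c / b < (u.2 - m₂) ^ 2 := by
        have := Real.lt_sq_of_sqrt_lt h1
        rwa [sq_abs] at this
      have h3 : c < b * (u.2 - m₂) ^ 2 := by
        rw [div_lt_iff₀ hb] at h2; linarith [h2]
      nlinarith [sq_nonneg (u.1 - m₁)]
  rw [max_eq_right hkey.le, Real.zero_rpow hs.ne']

lemma JJ (s : ℝ) (hs : 0 < s) : Jint s * Jint (s + 1/2) = π / (s + 1) := by
  have h1 := unit2D s hs
  have hint : Integrable (fun u : ℝ × ℝ => max (1 - u.1 ^ 2 - u.2 ^ 2) 0 ^ s) := by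
    have h := integrable2D s 1 1 1 0 0 hs one_pos one_pos one_pos
    have he : (fun u : ℝ × ℝ => max (1 - u.1 ^ 2 - u.2 ^ 2) 0 ^ s)
        = fun u : ℝ × ℝ => max (1 - 1 * (u.1 - 0) ^ 2 - 1 * (u.2 - 0) ^ 2) 0 ^ s := by
      funext u; norm_num
    rw [he]; exact h
  rw [show (volume : Measure (ℝ × ℝ)) = (volume : Measure ℝ).prod volume from Measure.volume_eq_prod ℝ ℝ]
    at h1 hint
  rw [integral_prod _ hint] at h1
  have hin : ∀ x : ℝ, (∫ y : ℝ, max (1 - x ^ 2 - y ^ 2) 0 ^ s)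
      = max (1 - x ^ 2) 0 ^ (s + 1/2) * Jint s := by
    intro x
    have := oneD s 1 (1 - x ^ 2) hs one_pos
    rw [Real.sqrt_one, div_one] at this
    rw [← this]
    congr 1 with y
    ring_nf
  simp_rw [hin] at h1
  rw [integral_mul_const] at h1
  have : (∫ x : ℝ, max (1 - x ^ 2) 0 ^ (s + 1/2)) = Jint (s + 1/2) := rfl
  rw [this] at h1
  rw [mul_comm, h1]

lemma twoD (s a b c m₁ m₂ : ℝ) (hs : 0 < s) (ha : 0 < a) (hb : 0 < b) (hc : 0 < c) :
    ∫ u : ℝ × ℝ, max (c - a * (u.1 - m₁) ^ 2 - b * (u.2 - m₂) ^ 2) 0 ^ s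
      = π * c ^ (s + 1) / ((s + 1) * Real.sqrt (a * b)) := by
  have hint := integrable2D s a b c m₁ m₂ hs ha hb hc
  rw [show (volume : Measure (ℝ × ℝ)) = (volume : Measure ℝ).prod volume from Measure.volume_eq_prod ℝ ℝ]
    at hint ⊢
  rw [integral_prod _ hint]
  have hin : ∀ x : ℝ, (∫ y : ℝ, max (c - a * (x - m₁) ^ 2 - b * (y - m₂) ^ 2) 0 ^ s)
      = max (c - a * (x - m₁) ^ 2) 0 ^ (s + 1/2) / Real.sqrt b * Jint s := by
    intro x
    have htr : (∫ y : ℝ, max (c - a * (x - m₁) ^ 2 - b * (y - m₂) ^ 2) 0 ^ s)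
        = ∫ y : ℝ, (fun z => max ((c - a * (x - m₁) ^ 2) - b * z ^ 2) 0 ^ s) (y - m₂) := rfl
    rw [htr, integral_sub_right_eq_self (fun z : ℝ => max ((c - a * (x - m₁) ^ 2) - b * z ^ 2) 0 ^ s) m₂, oneD s b _ hs hb]
  simp_rw [hin]
  rw [integral_mul_const]
  have hout : (∫ x : ℝ, max (c - a * (x - m₁) ^ 2) 0 ^ (s + 1/2) / Real.sqrt b)
      = (∫ x : ℝ, (fun z => max (c - a * z ^ 2) 0 ^ (s + 1/2)) (x - m₁)) / Real.sqrt b := by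
    rw [integral_div]
  rw [hout, integral_sub_right_eq_self (fun z : ℝ => max (c - a * z ^ 2) 0 ^ (s + 1/2)) m₁, oneD (s + 1/2) a c (by linarith) ha]
  rw [max_eq_left hc.le]
  have hexp : s + 1/2 + 1/2 = s + 1 := by ring
  rw [hexp]
  have hJ := JJ s hs
  have hab : Real.sqrt a * Real.sqrt b = Real.sqrt (a * b) := (Real.sqrt_mul ha.le b).symm
  have hsa : Real.sqrt a > 0 := Real.sqrt_pos.mpr ha
  have hsb : Real.sqrt b > 0 := Real.sqrt_pos.mpr hb
  have hs1 : s + 1 ≠ 0 := by linarith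
  rw [← hab]
  rw [show c ^ (s+1) / Real.sqrt a * Jint (s + 1/2) / Real.sqrt b * Jint s
      = (Jint s * Jint (s + 1/2)) * c ^ (s+1) / (Real.sqrt a * Real.sqrt b) by ring]
  rw [hJ]
  field_simp

theorem qGaussian_ellipse_entropy (p γ κ lam α m₁ m₂ : ℝ)
    (hp : 1 < p) (hγ : 0 < γ) (hκ : 0 < κ) (hlam : 0 < lam) (hα : α < 0)
    (ψ : ℝ)
    (hψ : ψ = ((1 / Real.pi) * Real.sqrt (-lam * κ * α / 2)) ^ ((p - 1) / p)
      * (p / (p - 1)) * γ ^ (1 / p))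
    (ρ : ℝ × ℝ → ℝ)
    (hρ : ∀ u : ℝ × ℝ, ρ u = ((p - 1) / (γ * p)) ^ (1 / (p - 1)) *
      (max (ψ - κ * (u.1 - m₁) ^ 2 + α * lam / 2 * (u.2 - m₂) ^ 2) 0) ^ (1 / (p - 1))) :
    (∫ u : ℝ × ℝ, 1 / (p - 1) * (ρ u - ρ u ^ p)) = 1 / (p - 1) - ψ / ((2 * p - 1) * γ) := by
  have hp1 : 0 < p - 1 := by linarith
  have hπ : (0:ℝ) < π := Real.pi_pos
  set s : ℝ := 1 / (p - 1) with hs_def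
  have hs : 0 < s := by rw [hs_def]; exact div_pos one_pos hp1
  set b : ℝ := -(α * lam / 2) with hb_def
  have hb : 0 < b := by rw [hb_def]; nlinarith
  have harg : -lam * κ * α / 2 = κ * b := by rw [hb_def]; ring
  set W : ℝ := Real.sqrt (κ * b) with hW_def
  have hW : (0:ℝ) < W := by rw [hW_def]; exact Real.sqrt_pos.mpr (by positivity)
  set K : ℝ := 1 / π * W with hK_def
  have hK : 0 < K := by rw [hK_def]; positivity
  set w : ℝ := p / (p - 1) with hw_def
  have hw : 0 < w := by rw [hw_def]; exact div_pos (by linarith) hp1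
  have hψ' : ψ = K ^ ((p - 1) / p) * w * γ ^ (1 / p) := by
    rw [hψ, harg, hK_def, hW_def, hw_def]
  have hψpos : 0 < ψ := by
    rw [hψ']
    exact mul_pos (mul_pos (Real.rpow_pos_of_pos hK _) hw) (Real.rpow_pos_of_pos hγ _)
  have hsw : s + 1 = w := by
    rw [hs_def, hw_def]
    field_simp
    ring
  have hsp : s * p = w := by rw [hs_def, hw_def]; ring
  set C : ℝ := ((p - 1) / (γ * p)) ^ s with hC_def
  have hCpos : 0 < C := by
    rw [hC_def]
    exact Real.rpow_pos_of_pos (div_pos hp1 (mul_pos hγ (by linarith))) s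
  set f : ℝ × ℝ → ℝ := fun u => max (ψ - κ * (u.1 - m₁) ^ 2 - b * (u.2 - m₂) ^ 2) 0 with hf_def
  have hfnn : ∀ u, 0 ≤ f u := fun u => le_max_right _ _
  have hρ' : ∀ u, ρ u = C * f u ^ s := by
    intro u
    rw [hρ u]
    have hbase : ψ - κ * (u.1 - m₁) ^ 2 + α * lam / 2 * (u.2 - m₂) ^ 2
        = ψ - κ * (u.1 - m₁) ^ 2 - b * (u.2 - m₂) ^ 2 := by rw [hb_def]; ring
    rw [hbase]
  have hρp : ∀ u, ρ u ^ p = C ^ p * f u ^ w := by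
    intro u
    rw [hρ' u, Real.mul_rpow hCpos.le (Real.rpow_nonneg (hfnn u) s),
      ← Real.rpow_mul (hfnn u), hsp]
  have hI1 : (∫ u : ℝ × ℝ, f u ^ s) = π * ψ ^ (s + 1) / ((s + 1) * W) :=
    twoD s κ b ψ m₁ m₂ hs hκ hb hψpos
  have hIp : (∫ u : ℝ × ℝ, f u ^ w) = π * ψ ^ (w + 1) / ((w + 1) * W) :=
    twoD w κ b ψ m₁ m₂ hw hκ hb hψpos
  have hint1 : Integrable (fun u : ℝ × ℝ => f u ^ s) :=
    integrable2D s κ b ψ m₁ m₂ hs hκ hb hψpos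
  have hintp : Integrable (fun u : ℝ × ℝ => f u ^ w) :=
    integrable2D w κ b ψ m₁ m₂ hw hκ hb hψpos
  have hiρ : Integrable ρ := by
    have : ρ = fun u => C * f u ^ s := funext hρ'
    rw [this]; exact hint1.const_mul C
  have hiρp : Integrable (fun u : ℝ × ℝ => ρ u ^ p) := by
    have : (fun u : ℝ × ℝ => ρ u ^ p) = fun u => C ^ p * f u ^ w := funext hρp
    rw [this]; exact hintp.const_mul _
  -- rpow algebra
  have hψw : ψ ^ w = K * w ^ w * γ ^ s := by
    rw [hψ', Real.mul_rpow (mul_nonneg (Real.rpow_nonneg hK.le _) hw.le)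
        (Real.rpow_nonneg hγ.le _),
      Real.mul_rpow (Real.rpow_nonneg hK.le _) hw.le,
      ← Real.rpow_mul hK.le, ← Real.rpow_mul hγ.le]
    have e1 : (p - 1) / p * w = 1 := by rw [hw_def]; field_simp
    have e2 : 1 / p * w = s := by rw [hw_def, hs_def]; field_simp
    rw [e1, e2, Real.rpow_one]
  have hC' : C = w ^ (-s) * γ ^ (-s) := by
    rw [hC_def]
    have hbase : (p - 1) / (γ * p) = w⁻¹ * γ⁻¹ := by
      rw [hw_def]
      field_simp
    rw [hbase, Real.mul_rpow (by positivity) (by positivity),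
      Real.inv_rpow hw.le, Real.inv_rpow hγ.le,
      ← Real.rpow_neg hw.le, ← Real.rpow_neg hγ.le]
  have hCp : C ^ p = w ^ (-w) * γ ^ (-w) := by
    rw [hC', Real.mul_rpow (Real.rpow_nonneg hw.le _) (Real.rpow_nonneg hγ.le _),
      ← Real.rpow_mul hw.le, ← Real.rpow_mul hγ.le,
      show -s * p = -w by rw [← hsp]; ring]
  have h1 : w ^ (-s) * w ^ w = w := by
    rw [← Real.rpow_add hw, show -s + w = 1 by rw [← hsw]; ring, Real.rpow_one]
  have h2 : γ ^ (-s) * γ ^ s = 1 := by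
    rw [← Real.rpow_add hγ]; simp
  have h3 : w ^ (-w) * w ^ w = 1 := by
    rw [← Real.rpow_add hw]; simp
  have h4 : γ ^ (-w) * γ ^ s = γ⁻¹ := by
    rw [← Real.rpow_add hγ, show -w + s = -1 by rw [← hsw]; ring, Real.rpow_neg_one]
  have hπK : π * K = W := by
    rw [hK_def]; field_simp
  have hnorm : (∫ u : ℝ × ℝ, ρ u) = 1 := by
    have hstep : (∫ u : ℝ × ℝ, ρ u) = C * (π * ψ ^ (s + 1) / ((s + 1) * W)) := by
      simp_rw [hρ']
      rw [integral_const_mul, hI1]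
    rw [hstep, hsw, hψw, hC']
    rw [show w ^ (-s) * γ ^ (-s) * (π * (K * w ^ w * γ ^ s) / (w * W))
        = (w ^ (-s) * w ^ w) * (γ ^ (-s) * γ ^ s) * (π * K) / (w * W) by ring]
    rw [h1, h2, hπK]
    field_simp
  have hval : 1 / (p - 1) * (∫ u : ℝ × ℝ, ρ u ^ p) = ψ / ((2 * p - 1) * γ) := by
    have hstep : (∫ u : ℝ × ℝ, ρ u ^ p) = C ^ p * (π * ψ ^ (w + 1) / ((w + 1) * W)) := by
      simp_rw [hρp]
      rw [integral_const_mul, hIp]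
    have hψw1 : ψ ^ (w + 1) = K * w ^ w * γ ^ s * ψ := by
      rw [Real.rpow_add hψpos, hψw, Real.rpow_one]
    rw [hstep, hCp, hψw1]
    rw [show 1 / (p - 1) * (w ^ (-w) * γ ^ (-w) * (π * (K * w ^ w * γ ^ s * ψ) / ((w + 1) * W)))
        = 1 / (p - 1) * ((w ^ (-w) * w ^ w) * (γ ^ (-w) * γ ^ s) * (π * K) * ψ / ((w + 1) * W))
        by ring]
    rw [h3, h4, hπK]
    have hw1 : w + 1 = (2 * p - 1) / (p - 1) := by
      rw [hw_def]; field_simp; ring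
    have h2p : (0:ℝ) < 2 * p - 1 := by linarith
    rw [hw1]
    field_simp
  calc (∫ u : ℝ × ℝ, 1 / (p - 1) * (ρ u - ρ u ^ p))
      = 1 / (p - 1) * ∫ u : ℝ × ℝ, (ρ u - ρ u ^ p) := integral_const_mul _ _
    _ = 1 / (p - 1) * ((∫ u : ℝ × ℝ, ρ u) - ∫ u : ℝ × ℝ, ρ u ^ p) := by
        rw [integral_sub hiρ hiρp]
    _ = 1 / (p - 1) - 1 / (p - 1) * ∫ u : ℝ × ℝ, ρ u ^ p := by rw [hnorm]; ring
    _ = 1 / (p - 1) - ψ / ((2 * p - 1) * γ) := by rw [hval]
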